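/- arXiv:1709.08560 — 2 statements merged into one kernel-verified Lean document; each statement's English description precedes it below -/
import Mathlib

section
/- Let R be a commutative domain with field of fractions Q, and let M be a finitely generated torsion R-module over a PID R. Suppose B : M × M → Q/R is a sesquilinear, nonsingular pairing (with respect to an involution on R), and suppose P ⊆ M is a submodule with P = P^⊥ := {x ∈ M : B(x,y) = 0 for all y ∈ P}. Then the sequence 0 → P → M → Hom_R(P, Q/R) → 0, where the second map sends x to (y ↦ B(x,y)), is exact. -/
/-!  STATEMENT 9: Let R be a PID with involution, Q its field of fractions, M a finitely
generated torsion R-module, and B : M × M → Q/R a nonsingular sesquilinear pairing.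
If P ⊆ M is a submodule with P = P^⊥, then
0 → P → M → Hom_R(P, Q/R) → 0, the second map being x ↦ (y ↦ B(x,y)), is exact.
(Hom_R(P, Q/R)^t is realised as the module of star-semilinear maps P → Q/R.)
Exactness is expressed as: the inclusion P → M is injective (trivially), the kernel of
x ↦ B(x,·)|_P is exactly P, and x ↦ B(x,·)|_P surjects onto the semilinear maps. -/



/-- Type synonym carrying the star-twisted module structure. -/
def StarTwist (R N : Type*) := N

section StarTwist

variable (R : Type*) [CommRing R] [StarRing R] (N : Type*) [AddCommGroup N] [Module R N]

instance : AddCommGroup (StarTwist R N) := inferInstanceAs (AddCommGroup N)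

instance : Module R (StarTwist R N) := Module.compHom N (starRingEnd R)

/-- The identity, as a map `N → StarTwist R N`. -/
def StarTwist.mk : N → StarTwist R N := id

/-- The identity, as a map `StarTwist R N → N`. -/
def StarTwist.get : StarTwist R N → N := id

variable {R N}

lemma StarTwist.smul_mk (r : R) (x : N) :
    r • StarTwist.mk R N x = StarTwist.mk R N (star r • x) := rfl

lemma StarTwist.get_smul (r : R) (x : StarTwist R N) :
    StarTwist.get R N (r • x) = star r • StarTwist.get R N x := rfl

lemma StarTwist.mk_get (x : StarTwist R N) : StarTwist.mk R N (StarTwist.get R N x) = x := rfl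

lemma StarTwist.get_mk (x : N) : StarTwist.get R N (StarTwist.mk R N x) = x := rfl

lemma StarTwist.mk_add (x y : N) :
    StarTwist.mk R N (x + y) = StarTwist.mk R N x + StarTwist.mk R N y := rfl

lemma StarTwist.get_add (x y : StarTwist R N) :
    StarTwist.get R N (x + y) = StarTwist.get R N x + StarTwist.get R N y := rfl

end StarTwist

/-- The star-twisted `Q/R` is a Baer module (hence injective) over a PID. -/
lemma baer_starTwist_qr (R : Type*) [CommRing R] [StarRing R] [IsDomain R]
    [IsPrincipalIdealRing R] :
    Module.Baer R (StarTwist R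
      ((FractionRing R) ⧸ LinearMap.range (Algebra.linearMap R (FractionRing R)))) := by
  set QR := (FractionRing R) ⧸ LinearMap.range (Algebra.linearMap R (FractionRing R)) with hQR
  -- divisibility of QR
  have hdiv : ∀ (z : QR) (a : R), a ≠ 0 → ∃ w : QR, a • w = z := by
    intro z a ha
    obtain ⟨q, rfl⟩ := Submodule.Quotient.mk_surjective _ z
    refine ⟨Submodule.Quotient.mk ((algebraMap R (FractionRing R) a)⁻¹ * q), ?_⟩
    rw [← Submodule.Quotient.mk_smul]
    congr 1
    rw [Algebra.smul_def, ← mul_assoc, mul_inv_cancel₀, one_mul]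
    exact (map_ne_zero_iff _ (IsFractionRing.injective R (FractionRing R))).mpr ha
  intro I g
  obtain ⟨a, haI⟩ := (IsPrincipalIdealRing.principal I).principal
  by_cases ha : a = 0
  · refine ⟨0, fun x hx => ?_⟩
    have hx0 : x = 0 := by
      rw [haI, ha, Submodule.span_zero_singleton] at hx
      simpa using hx
    have : (⟨x, hx⟩ : I) = 0 := by ext; simp [hx0]
    rw [this, map_zero, LinearMap.zero_apply]
  · have haM : a ∈ I := haI ▸ Submodule.mem_span_singleton_self a
    have hsa : star a ≠ 0 := fun h => ha (by simpa using congrArg star h)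
    obtain ⟨w, hw⟩ := hdiv (StarTwist.get R QR (g ⟨a, haM⟩)) (star a) hsa
    refine ⟨LinearMap.toSpanSingleton R _ (StarTwist.mk R QR w), fun x hx => ?_⟩
    have hx' : x ∈ Submodule.span R {a} := haI ▸ hx
    rw [Submodule.mem_span_singleton] at hx'
    obtain ⟨r, hr⟩ := hx'
    have hxr : (⟨x, hx⟩ : I) = r • (⟨a, haM⟩ : I) := by
      ext; simp [← hr]
    rw [hxr, map_smul, LinearMap.toSpanSingleton_apply, ← hr]
    rw [smul_eq_mul, mul_smul, StarTwist.smul_mk, hw, StarTwist.mk_get]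

open scoped Classical

theorem metaboliser_exact_sequence
    (R : Type*) [CommRing R] [StarRing R] [IsDomain R] [IsPrincipalIdealRing R]
    (M : Type*) [AddCommGroup M] [Module R M] [Module.Finite R M]
    (htor : Module.IsTorsion R M)
    -- Q/R :
    (B : M → M → ((FractionRing R) ⧸ LinearMap.range (Algebra.linearMap R (FractionRing R))))
    (haddl : ∀ x x' y, B (x + x') y = B x y + B x' y)
    (haddr : ∀ x y y', B x (y + y') = B x y + B x y')
    (hsmull : ∀ (r : R) x y, B (r • x) y = r • B x y)
    (hsmulr : ∀ (s : R) x y, B x (s • y) = (star s) • B x y)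
    -- nonsingularity: the adjoint x ↦ B(x,·) is injective and surjects onto the
    -- star-semilinear maps M → Q/R :
    (hinj : ∀ x, (∀ y, B x y = 0) → x = 0)
    (hsurj : ∀ f : M →ₛₗ[starRingEnd R]
        ((FractionRing R) ⧸ LinearMap.range (Algebra.linearMap R (FractionRing R))),
        ∃ x, ∀ y, B x y = f y)
    -- the metaboliser P = P^⊥ :
    (P : Submodule R M)
    (hP : ∀ x, x ∈ P ↔ ∀ y ∈ P, B x y = 0) :
    -- exactness of 0 → P → M → Hom(P, Q/R) → 0 :
    (Function.Injective (P.subtype)) ∧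
    (∀ x : M, (∀ y : P, B x (y : M) = 0) ↔ x ∈ P) ∧
    (∀ f : P →ₛₗ[starRingEnd R]
        ((FractionRing R) ⧸ LinearMap.range (Algebra.linearMap R (FractionRing R))),
        ∃ x : M, ∀ y : P, B x (y : M) = f y) := by
  set QR := (FractionRing R) ⧸ LinearMap.range (Algebra.linearMap R (FractionRing R)) with hQR
  refine ⟨P.injective_subtype, ?_, ?_⟩
  · intro x
    constructor
    · intro h
      exact (hP x).mpr (fun y hy => h ⟨y, hy⟩)
    · intro hx y
      exact (hP x).mp hx y y.2
  · intro f
    -- turn `f` into an `R`-linear map into the star-twisted module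
    let g : P →ₗ[R] StarTwist R QR :=
      { toFun := fun p => StarTwist.mk R QR (f p)
        map_add' := fun p q => by rw [map_add]; rfl
        map_smul' := fun r p => by
          rw [LinearMap.map_smulₛₗ, RingHom.id_apply, StarTwist.smul_mk,
            starRingEnd_apply] }
    haveI : Module.Injective R (StarTwist R QR) := (baer_starTwist_qr R).injective
    obtain ⟨F, hF⟩ := Module.Injective.extension_property R (StarTwist R QR) (↥P) M
      P.subtype P.injective_subtype g
    -- convert the extension back to a semilinear map
    let F' : M →ₛₗ[starRingEnd R] QR :=
      { toFun := fun m => StarTwist.get R QR (F m)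
        map_add' := fun m n => by rw [map_add]; rfl
        map_smul' := fun r m => by
          rw [map_smul, StarTwist.get_smul, starRingEnd_apply] }
    obtain ⟨x, hx⟩ := hsurj F'
    refine ⟨x, fun y => ?_⟩
    have h1 : F (P.subtype y) = g y := LinearMap.congr_fun hF y
    have h2 : F' (y : M) = f y := by
      show StarTwist.get R QR (F (P.subtype y)) = f y
      rw [h1]; rfl
    rw [hx (y : M), h2]
end

section
/- Let R be a PID with involution, Q its quotient field, and M a finitely generated torsion R-module with a nonsingular sesquilinear pairing B : M × M → Q/R admitting a metaboliser P (a submodule with P = P^⊥). Then the order ideal of M factors as ord(M) = ord(P) · overline{ord(P)}; in particular ord(M) = f · f̄ for some f ∈ R. -/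
open Matrix LinearMap

section CokerDet
variable {R : Type*} [CommRing R] [IsDomain R]
variable {ι κ : Type*} [Fintype ι] [Fintype κ] [DecidableEq ι] [DecidableEq κ]

lemma matrix_eq_of_mulVec_single {E F : Matrix κ ι R}
    (h : ∀ i, E *ᵥ Pi.single i 1 = F *ᵥ Pi.single i 1) : E = F := by
  ext k i
  have := congrFun (h i) k
  simpa using this

lemma exists_factor {ι' : Type*} [Fintype ι'] [DecidableEq ι']
    (C : Matrix κ κ R) (E : Matrix κ ι' R)
    (h : ∀ i, E *ᵥ Pi.single i 1 ∈ LinearMap.range (Matrix.toLin' C)) :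
    ∃ U : Matrix κ ι' R, C * U = E := by
  choose u hu using h
  refine ⟨Matrix.of fun k i => u i k, matrix_eq_of_mulVec_single fun i => ?_⟩
  have hcol : (Matrix.of fun k i => u i k : Matrix κ ι' R) *ᵥ Pi.single i 1 = u i := by
    funext k; simp
  rw [← Matrix.mulVec_mulVec, hcol]
  have := hu i
  rwa [Matrix.toLin'_apply] at this

theorem det_associated_of_coker_equiv
    (A : Matrix ι ι R) (C : Matrix κ κ R)
    (e : ((ι → R) ⧸ LinearMap.range (Matrix.toLin' A)) ≃ₗ[R]
         ((κ → R) ⧸ LinearMap.range (Matrix.toLin' C))) :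
    Associated A.det C.det := by
  set πA := (LinearMap.range (Matrix.toLin' A)).mkQ with hπA
  set πC := (LinearMap.range (Matrix.toLin' C)).mkQ with hπC
  have hAzero : ∀ w, πA (A *ᵥ w) = 0 := by
    intro w
    rw [hπA, Submodule.mkQ_apply, Submodule.Quotient.mk_eq_zero]
    exact ⟨w, Matrix.toLin'_apply A w⟩
  have hCzero : ∀ w, πC (C *ᵥ w) = 0 := by
    intro w
    rw [hπC, Submodule.mkQ_apply, Submodule.Quotient.mk_eq_zero]
    exact ⟨w, Matrix.toLin'_apply C w⟩
  -- lift e and e.symm to matrices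
  have hchoiceP : ∀ i : ι, ∃ y : κ → R, πC y = e (πA (Pi.single i 1)) := fun i =>
    Submodule.mkQ_surjective _ _
  choose p hp using hchoiceP
  set Pm : Matrix κ ι R := Matrix.of fun k i => p i k with hPmdef
  have hPm : ∀ w, πC (Pm *ᵥ w) = e (πA w) := by
    intro w
    have : (πC ∘ₗ Matrix.toLin' Pm) = ((e : _ →ₗ[R] _) ∘ₗ πA) := by
      apply Module.Basis.ext (Pi.basisFun R ι)
      intro i
      have hcol : Pm *ᵥ Pi.single i 1 = p i := by funext k; simp [hPmdef]
      simp only [LinearMap.comp_apply, Pi.basisFun_apply, Matrix.toLin'_apply, hcol]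
      exact hp i
    have := congrFun (congrArg DFunLike.coe this) w
    simpa [Matrix.toLin'_apply] using this
  have hchoiceQ : ∀ j : κ, ∃ y : ι → R, πA y = e.symm (πC (Pi.single j 1)) := fun j =>
    Submodule.mkQ_surjective _ _
  choose q hq using hchoiceQ
  set Qm : Matrix ι κ R := Matrix.of fun i j => q j i with hQmdef
  have hQm : ∀ w, πA (Qm *ᵥ w) = e.symm (πC w) := by
    intro w
    have : (πA ∘ₗ Matrix.toLin' Qm) = ((e.symm : _ →ₗ[R] _) ∘ₗ πC) := by
      apply Module.Basis.ext (Pi.basisFun R κ)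
      intro j
      have hcol : Qm *ᵥ Pi.single j 1 = q j := by funext i; simp [hQmdef]
      simp only [LinearMap.comp_apply, Pi.basisFun_apply, Matrix.toLin'_apply, hcol]
      exact hq j
    have := congrFun (congrArg DFunLike.coe this) w
    simpa [Matrix.toLin'_apply] using this
  -- the four factorizations
  obtain ⟨U, hU⟩ : ∃ U : Matrix κ ι R, C * U = Pm * A := by
    apply exists_factor
    intro i
    rw [← Matrix.mulVec_mulVec]
    have h0 : πC (Pm *ᵥ (A *ᵥ Pi.single i 1)) = 0 := by
      rw [hPm, hAzero, map_zero]
    rwa [hπC, Submodule.mkQ_apply, Submodule.Quotient.mk_eq_zero] at h0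
  obtain ⟨V, hV⟩ : ∃ V : Matrix ι κ R, A * V = Qm * C := by
    apply exists_factor
    intro j
    rw [← Matrix.mulVec_mulVec]
    have h0 : πA (Qm *ᵥ (C *ᵥ Pi.single j 1)) = 0 := by
      rw [hQm, hCzero, map_zero]
    rwa [hπA, Submodule.mkQ_apply, Submodule.Quotient.mk_eq_zero] at h0
  obtain ⟨S, hS⟩ : ∃ S : Matrix ι ι R, A * S = Qm * Pm - 1 := by
    apply exists_factor
    intro i
    rw [Matrix.sub_mulVec, ← Matrix.mulVec_mulVec, Matrix.one_mulVec]
    have h0 : πA (Qm *ᵥ (Pm *ᵥ Pi.single i 1) - Pi.single i 1) = 0 := by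
      rw [map_sub, hQm, hPm, LinearEquiv.symm_apply_apply, sub_self]
    rwa [hπA, Submodule.mkQ_apply, Submodule.Quotient.mk_eq_zero] at h0
  obtain ⟨T, hT⟩ : ∃ T : Matrix κ κ R, C * T = Pm * Qm - 1 := by
    apply exists_factor
    intro j
    rw [Matrix.sub_mulVec, ← Matrix.mulVec_mulVec, Matrix.one_mulVec]
    have h0 : πC (Pm *ᵥ (Qm *ᵥ Pi.single j 1) - Pi.single j 1) = 0 := by
      rw [map_sub, hPm, hQm, LinearEquiv.apply_symm_apply, sub_self]
    rwa [hπC, Submodule.mkQ_apply, Submodule.Quotient.mk_eq_zero] at h0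
  -- block matrix identities
  have hM2Φ : (fromBlocks A Qm 0 1 : Matrix (ι ⊕ κ) (ι ⊕ κ) R) *
      fromBlocks (-S) (-V) Pm C = fromBlocks 1 0 Pm C := by
    rw [Matrix.fromBlocks_multiply]
    simp only [Matrix.mul_neg, Matrix.zero_mul, Matrix.one_mul, hS, hV, zero_add,
      neg_sub, sub_add_cancel, neg_add_cancel, neg_zero]
  have hM1Ψ : (fromBlocks 1 0 Pm C : Matrix (ι ⊕ κ) (ι ⊕ κ) R) *
      fromBlocks A Qm (-U) (-T) = fromBlocks A Qm 0 1 := by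
    rw [Matrix.fromBlocks_multiply]
    simp only [Matrix.mul_neg, Matrix.one_mul, Matrix.zero_mul, add_zero, hU, hT,
      add_neg_cancel, neg_sub, add_sub_cancel, neg_zero]
  -- determinants
  have hd1 : A.det * (fromBlocks (-S) (-V) Pm C : Matrix (ι ⊕ κ) (ι ⊕ κ) R).det = C.det := by
    have := congrArg Matrix.det hM2Φ
    rwa [Matrix.det_mul, Matrix.det_fromBlocks_zero₂₁, Matrix.det_one, mul_one,
      Matrix.det_fromBlocks_zero₁₂, Matrix.det_one, one_mul] at this
  have hd2 : C.det * (fromBlocks A Qm (-U) (-T) : Matrix (ι ⊕ κ) (ι ⊕ κ) R).det = A.det := by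
    have := congrArg Matrix.det hM1Ψ
    rwa [Matrix.det_mul, Matrix.det_fromBlocks_zero₁₂, Matrix.det_one, one_mul,
      Matrix.det_fromBlocks_zero₂₁, Matrix.det_one, mul_one] at this
  exact associated_of_dvd_dvd ⟨_, hd1.symm⟩ ⟨_, hd2.symm⟩
end CokerDet

open LinearMap

/-- Type synonym: same additive group, scalar action twisted by `star`. -/
def ConjMod (M : Type*) := M

instance ConjMod.instAddCommGroup (M : Type*) [AddCommGroup M] : AddCommGroup (ConjMod M) :=
  inferInstanceAs (AddCommGroup M)

section ConjMod
variable (R M : Type*) [CommRing R] [StarRing R] [AddCommGroup M] [Module R M]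

instance ConjMod.instSMul : SMul R (ConjMod M) :=
  ⟨fun r x => (star r • (show M from x) : M)⟩

variable {R M}

lemma ConjMod.smul_def (r : R) (x : ConjMod M) :
    r • x = ((star r • (show M from x) : M) : ConjMod M) := rfl

variable (R M)

instance ConjMod.instMulAction : MulAction R (ConjMod M) where
  one_smul x := by
    change star (1 : R) • (show M from x) = (show M from x)
    rw [star_one, one_smul]
  mul_smul r s x := by
    change star (r * s) • (show M from x) = star r • star s • (show M from x)
    rw [star_mul', mul_smul]

instance ConjMod.instDistribMulAction : DistribMulAction R (ConjMod M) where
  smul_zero r := by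
    change star r • (0 : M) = (0 : M)
    rw [smul_zero]
  smul_add r x y := by
    change star r • ((show M from x) + (show M from y)) =
      star r • (show M from x) + star r • (show M from y)
    rw [smul_add]

instance ConjMod.instModule : Module R (ConjMod M) where
  add_smul r s x := by
    change star (r + s) • (show M from x) =
      star r • (show M from x) + star s • (show M from x)
    rw [star_add, add_smul]
  zero_smul x := by
    change star (0 : R) • (show M from x) = (0 : M)
    rw [star_zero, zero_smul]

end ConjMod

lemma baer_of_divisible {R : Type*} [CommRing R] [IsDomain R] [IsPrincipalIdealRing R]
    {N : Type*} [AddCommGroup N] [Module R N]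
    (hdiv : ∀ a : R, a ≠ 0 → ∀ z : N, ∃ d : N, a • d = z) : Module.Baer R N := by
  intro I gI
  obtain ⟨a, rfl⟩ := (IsPrincipalIdealRing.principal I).principal
  by_cases ha : a = 0
  · refine ⟨0, fun x mem => ?_⟩
    subst ha
    have hx : x = 0 := by
      have h := mem
      rw [Submodule.span_zero_singleton R] at h
      exact (Submodule.mem_bot R).mp h
    have : (⟨x, mem⟩ : Ideal.span {(0 : R)}) = 0 := Subtype.ext hx
    rw [this, map_zero, LinearMap.zero_apply]
  · obtain ⟨d, hd⟩ := hdiv a ha (gI ⟨a, Submodule.mem_span_singleton_self a⟩)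
    refine ⟨LinearMap.toSpanSingleton R N d, fun x mem => ?_⟩
    obtain ⟨c, hc⟩ := Ideal.mem_span_singleton'.mp mem
    have hsub : (⟨x, mem⟩ : Ideal.span {a}) = c • ⟨a, Submodule.mem_span_singleton_self a⟩ :=
      Subtype.ext (by simp [← hc, smul_eq_mul])
    rw [hsub, _root_.map_smul, ← hd, LinearMap.toSpanSingleton_apply, ← hc, mul_smul]

lemma qr_divisible (R : Type*) [CommRing R] [IsDomain R] :
    ∀ a : R, a ≠ 0 →
      ∀ z : (FractionRing R ⧸ LinearMap.range (Algebra.linearMap R (FractionRing R))),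
        ∃ d, a • d = z := by
  intro a ha z
  obtain ⟨q, rfl⟩ := Submodule.Quotient.mk_surjective _ z
  refine ⟨Submodule.Quotient.mk ((algebraMap R (FractionRing R) a)⁻¹ * q), ?_⟩
  rw [← Submodule.Quotient.mk_smul]
  congr 1
  rw [Algebra.smul_def, ← mul_assoc, mul_inv_cancel₀, one_mul]
  exact fun h0 => ha (IsFractionRing.to_map_eq_zero_iff.mp h0)

open LinearMap Matrix

section Helpers
variable {R : Type*} [CommRing R] {ι : Type*} [Fintype ι] [DecidableEq ι]

lemma sum_smul_single (w : ι → R) : ∑ i, w i • (Pi.single (M := fun _ => R) i 1) = w := by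
  funext j
  rw [Finset.sum_apply]
  have : ∀ i, (w i • (Pi.single (M := fun _ => R) i 1)) j = if j = i then w i else 0 := by
    intro i
    rw [Pi.smul_apply, Pi.single_apply]
    by_cases h : j = i <;> simp [h]
  rw [Finset.sum_congr rfl fun i _ => this i, Finset.sum_ite_eq]
  simp

lemma map_pi_single_sum {M : Type*} [AddCommGroup M] [Module R M]
    (g : (ι → R) →ₗ[R] M) (w : ι → R) : g w = ∑ i, w i • g (Pi.single (M := fun _ => R) i 1) := by
  conv_lhs => rw [← sum_smul_single w]
  rw [map_sum]
  simp_rw [_root_.map_smul]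

end Helpers

set_option maxHeartbeats 2000000
set_option synthInstance.maxHeartbeats 200000

/-!  STATEMENT 10: Let R be a PID with involution, Q its quotient field, M a f.g. torsion
R-module with a nonsingular sesquilinear pairing B : M × M → Q/R admitting a metaboliser
P = P^⊥.  Then ord(M) = ord(P)·conj(ord(P)); in particular ord(M) = f·f̄ for some f ∈ R.
The order of a f.g. torsion module over a PID is realised as the determinant of a square
presentation matrix, well defined up to units (i.e. up to `Associated`). -/

theorem order_is_norm_of_metabolic
    (R : Type*) [CommRing R] [StarRing R] [IsDomain R] [IsPrincipalIdealRing R]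
    (M : Type*) [AddCommGroup M] [Module R M] [Module.Finite R M]
    (htor : Module.IsTorsion R M)
    (B : M → M → ((FractionRing R) ⧸ LinearMap.range (Algebra.linearMap R (FractionRing R))))
    (haddl : ∀ x x' y, B (x + x') y = B x y + B x' y)
    (haddr : ∀ x y y', B x (y + y') = B x y + B x y')
    (hsmull : ∀ (r : R) x y, B (r • x) y = r • B x y)
    (hsmulr : ∀ (s : R) x y, B x (s • y) = (star s) • B x y)
    (hinj : ∀ x, (∀ y, B x y = 0) → x = 0)
    (hsurj : ∀ f : M →ₛₗ[starRingEnd R]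
        ((FractionRing R) ⧸ LinearMap.range (Algebra.linearMap R (FractionRing R))),
        ∃ x, ∀ y, B x y = f y)
    (P : Submodule R M)
    (hP : ∀ x, x ∈ P ↔ ∀ y ∈ P, B x y = 0)
    -- a square presentation matrix for M, whose determinant is ord(M):
    (n : ℕ) (A : Matrix (Fin n) (Fin n) R)
    (presM : ((Fin n → R) ⧸ LinearMap.range (Matrix.toLin' A)) ≃ₗ[R] M)
    -- a square presentation matrix for P, whose determinant is ord(P):
    (m : ℕ) (A' : Matrix (Fin m) (Fin m) R)
    (presP : ((Fin m → R) ⧸ LinearMap.range (Matrix.toLin' A')) ≃ₗ[R] P) :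
    Associated A.det (A'.det * star A'.det) ∧
      ∃ f : R, Associated A.det (f * star f) := by
  classical
  have halginj : Function.Injective (algebraMap R (FractionRing R)) :=
    IsFractionRing.injective R (FractionRing R)
  -- basic facts about B
  have hB0 : ∀ x, B x 0 = 0 := by
    intro x
    have h := haddr x 0 0
    rw [add_zero] at h
    exact (left_eq_add.mp h)
  -- ## Step B: det A' ≠ 0
  have hdetA' : A'.det ≠ 0 := by
    have hPtor : ∀ i : Fin m, ∃ r : R, r ≠ 0 ∧
        r • (Pi.single (M := fun _ => R) i 1) ∈ LinearMap.range (Matrix.toLin' A') := by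
      intro i
      set z : ((Fin m → R) ⧸ LinearMap.range (Matrix.toLin' A')) :=
        Submodule.Quotient.mk (Pi.single (M := fun _ => R) i 1) with hz
      obtain ⟨r, hr⟩ := htor (x := ((presP z : P) : M))
      refine ⟨(r : R), nonZeroDivisors.ne_zero r.2, ?_⟩
      have h1 : (r : R) • ((presP z : P) : M) = 0 := by
        rw [← Submonoid.smul_def]; exact hr
      have h2 : presP ((r : R) • z) = 0 := by
        apply Subtype.ext
        rw [_root_.map_smul]
        simpa using h1
      have h3 : (r : R) • z = 0 := by
        exact (LinearEquiv.map_eq_zero_iff presP).mp h2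
      rw [hz, ← Submodule.Quotient.mk_smul, Submodule.Quotient.mk_eq_zero] at h3
      exact h3
    choose r hr0 hrmem using hPtor
    have hfac : ∀ i, ∃ w : Fin m → R, A' *ᵥ w = r i • (Pi.single (M := fun _ => R) i 1) := by
      intro i
      obtain ⟨w, hw⟩ := hrmem i
      exact ⟨w, by rw [← Matrix.toLin'_apply]; exact hw⟩
    choose w hw using hfac
    have hAW : A' * (Matrix.of fun j i => w i j) = Matrix.diagonal r := by
      apply matrix_eq_of_mulVec_single
      intro i
      have hcol : (Matrix.of fun j i => w i j : Matrix (Fin m) (Fin m) R) *ᵥ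
          Pi.single i 1 = w i := by funext k; simp
      rw [← Matrix.mulVec_mulVec, hcol, hw, Matrix.diagonal_mulVec_single]
      funext j
      rw [Pi.smul_apply, Pi.single_apply, Pi.single_apply]
      by_cases h : j = i <;> simp [h]
    intro hdet0
    have := congrArg Matrix.det hAW
    rw [Matrix.det_mul, hdet0, zero_mul, Matrix.det_diagonal] at this
    exact (Finset.prod_ne_zero_iff.mpr fun i _ => hr0 i) this.symm
  -- ## Step C: the surjection g : R^m → P ⊆ M
  set g : (Fin m → R) →ₗ[R] M :=
    P.subtype ∘ₗ (presP : _ →ₗ[R] P) ∘ₗ (LinearMap.range (Matrix.toLin' A')).mkQ with hgdef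
  have hgP : ∀ w, g w ∈ P := fun w => (presP _).2
  have gapp : ∀ x, g x = ((presP (Submodule.Quotient.mk x) : P) : M) := fun _ => rfl
  have hgzero : ∀ x, g x = 0 ↔ x ∈ LinearMap.range (Matrix.toLin' A') := by
    intro x
    rw [gapp, ZeroMemClass.coe_eq_zero, LinearEquiv.map_eq_zero_iff,
      Submodule.Quotient.mk_eq_zero]
  have hgker : LinearMap.ker g = LinearMap.range (Matrix.toLin' A') := by
    ext x; rw [LinearMap.mem_ker]; exact hgzero x
  have hgrange : ∀ x, x ∈ P ↔ ∃ w, g w = x := by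
    intro x
    constructor
    · intro hx
      obtain ⟨z, hz⟩ := presP.surjective ⟨x, hx⟩
      obtain ⟨w, hwz⟩ := Submodule.Quotient.mk_surjective _ z
      refine ⟨w, ?_⟩
      rw [gapp, hwz, hz]
    · rintro ⟨w, rfl⟩; exact hgP w
  -- ## Step D: the map c : M → (((FractionRing R) ⧸ LinearMap.range (Algebra.linearMap R (FractionRing R))))^m, with kernel P
  have cadd : ∀ x x', (fun i => B (x + x') (g (Pi.single i 1)))
      = (fun i => B x (g (Pi.single i 1))) + (fun i => B x' (g (Pi.single i 1))) := by
    intro x x'; funext i; exact haddl x x' _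
  set c : M →ₗ[R] (Fin m → ((FractionRing R) ⧸ LinearMap.range (Algebra.linearMap R (FractionRing R)))) :=
    { toFun := fun x i => B x (g (Pi.single i 1))
      map_add' := cadd
      map_smul' := by intro rr x; funext i; exact hsmull rr x _ } with hcdef
  -- B is additive in the second variable: as AddMonoidHom
  have hBsum : ∀ x (s : Finset (Fin m)) (f : Fin m → M),
      B x (∑ j ∈ s, f j) = ∑ j ∈ s, B x (f j) := by
    intro x s f
    exact map_sum (AddMonoidHom.mk' (B x) (haddr x)) f s
  have hkerc : LinearMap.ker c = P := by
    ext x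
    rw [LinearMap.mem_ker]
    constructor
    · intro hx
      rw [hP]
      intro y hy
      obtain ⟨wv, rfl⟩ := (hgrange y).mp hy
      rw [map_pi_single_sum g wv, hBsum]
      have : ∀ j, B x (wv j • g (Pi.single (M := fun _ => R) j 1)) = 0 := by
        intro j
        rw [hsmulr]
        have hcx : B x (g (Pi.single (M := fun _ => R) j 1)) = 0 := congrFun hx j
        rw [hcx, smul_zero]
      rw [Finset.sum_congr rfl fun j _ => this j, Finset.sum_const_zero]
    · intro hx
      funext i
      exact (hP x).mp hx _ (hgP _)
  -- ## Step E: the conjugate transpose matrix and the map φ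
  set Cm : Matrix (Fin m) (Fin m) R := A'ᴴ with hCm
  have hdetCm : Cm.det = star A'.det := Matrix.det_conjTranspose A'
  have hdetCm0 : Cm.det ≠ 0 := by
    rw [hdetCm]
    intro h
    apply hdetA'
    simpa using congrArg star h
  set Cq : Matrix (Fin m) (Fin m) (FractionRing R) := Cm.map (algebraMap R (FractionRing R)) with hCq
  have hCqdet : IsUnit Cq.det := by
    rw [isUnit_iff_ne_zero]
    have : Cq.det = (algebraMap R (FractionRing R)) Cm.det := ((algebraMap R (FractionRing R)).map_det Cm).symm
    rw [this]
    intro h0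
    exact hdetCm0 (halginj (by rw [h0]; exact (map_zero _).symm))
  have hCqinv : Cq⁻¹ * Cq = 1 := Matrix.nonsing_inv_mul Cq hCqdet
  have hCqinv' : Cq * Cq⁻¹ = 1 := Matrix.mul_nonsing_inv Cq hCqdet
  have halgvec : ∀ (E : Matrix (Fin m) (Fin m) R) (u : Fin m → R),
      (fun i => (algebraMap R (FractionRing R)) ((E *ᵥ u) i)) = (E.map (algebraMap R (FractionRing R))) *ᵥ (fun j => (algebraMap R (FractionRing R)) (u j)) := by
    intro E u
    funext i
    simp [Matrix.mulVec, dotProduct, _root_.map_sum, _root_.map_mul]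
  set φf : (Fin m → R) → (Fin m → ((FractionRing R) ⧸ LinearMap.range (Algebra.linearMap R (FractionRing R)))) :=
    fun w i => Submodule.Quotient.mk ((Cq⁻¹ *ᵥ fun j => (algebraMap R (FractionRing R)) (w j)) i) with hφf
  have hφadd : ∀ w w', φf (w + w') = φf w + φf w' := by
    intro w w'
    funext i
    have h1 : (fun j => (algebraMap R (FractionRing R)) ((w + w') j)) = (fun j => (algebraMap R (FractionRing R)) (w j)) + (fun j => (algebraMap R (FractionRing R)) (w' j)) := by
      funext j; simp
    rw [hφf]
    show Submodule.Quotient.mk ((Cq⁻¹ *ᵥ fun j => (algebraMap R (FractionRing R)) ((w + w') j)) i) = _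
    rw [h1, Matrix.mulVec_add]
    rfl
  have hφsmul : ∀ (rr : R) w, φf (rr • w) = rr • φf w := by
    intro rr w
    funext i
    have h1 : (fun j => (algebraMap R (FractionRing R)) ((rr • w) j)) = (algebraMap R (FractionRing R)) rr • (fun j => (algebraMap R (FractionRing R)) (w j)) := by
      funext j; simp [Algebra.smul_def]
    rw [hφf]
    show Submodule.Quotient.mk ((Cq⁻¹ *ᵥ fun j => (algebraMap R (FractionRing R)) ((rr • w) j)) i) = _
    rw [h1, Matrix.mulVec_smul]
    show Submodule.Quotient.mk ((algebraMap R (FractionRing R)) rr • (Cq⁻¹ *ᵥ fun j => (algebraMap R (FractionRing R)) (w j)) i) = _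
    rw [algebraMap_smul, Submodule.Quotient.mk_smul]
    rfl
  set φ : (Fin m → R) →ₗ[R] (Fin m → ((FractionRing R) ⧸ LinearMap.range (Algebra.linearMap R (FractionRing R)))) :=
    { toFun := φf
      map_add' := hφadd
      map_smul' := hφsmul } with hφdef
  -- the key predicate
  set Hv : (Fin m → ((FractionRing R) ⧸ LinearMap.range (Algebra.linearMap R (FractionRing R)))) → Prop := fun v => ∀ j, ∑ i, star (A' i j) • v i = 0 with hHv
  -- range φ: ker φ = range (toLin' Cm)
  have hkerφ : LinearMap.ker φ = LinearMap.range (Matrix.toLin' Cm) := by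
    ext x
    rw [LinearMap.mem_ker]
    constructor
    · intro hx
      have hx' : ∀ i, ∃ u : R, (algebraMap R (FractionRing R)) u = (Cq⁻¹ *ᵥ fun j => (algebraMap R (FractionRing R)) (x j)) i := by
        intro i
        have := congrFun hx i
        rw [hφdef] at this
        have h0 : Submodule.Quotient.mk ((Cq⁻¹ *ᵥ fun j => (algebraMap R (FractionRing R)) (x j)) i)
            = (0 : ((FractionRing R) ⧸ LinearMap.range (Algebra.linearMap R (FractionRing R)))) := this
        rw [Submodule.Quotient.mk_eq_zero] at h0
        obtain ⟨u, hu⟩ := h0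
        exact ⟨u, hu⟩
      choose u hu using hx'
      refine ⟨u, ?_⟩
      rw [Matrix.toLin'_apply]
      have h1 : (fun j => (algebraMap R (FractionRing R)) ((Cm *ᵥ u) j)) = fun j => (algebraMap R (FractionRing R)) (x j) := by
        rw [halgvec]
        have h2 : (fun j => (algebraMap R (FractionRing R)) (u j)) = Cq⁻¹ *ᵥ (fun j => (algebraMap R (FractionRing R)) (x j)) := funext hu
        rw [h2, Matrix.mulVec_mulVec, ← hCq, hCqinv', Matrix.one_mulVec]
      funext j
      exact halginj (congrFun h1 j)
    · rintro ⟨u, rfl⟩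
      rw [Matrix.toLin'_apply]
      funext i
      rw [hφdef]
      show Submodule.Quotient.mk ((Cq⁻¹ *ᵥ fun j => (algebraMap R (FractionRing R)) ((Cm *ᵥ u) j)) i) = 0
      rw [halgvec, Matrix.mulVec_mulVec, ← hCq, hCqinv, Matrix.one_mulVec,
        Submodule.Quotient.mk_eq_zero]
      exact ⟨u i, rfl⟩
  have hmksum : ∀ (f : Fin m → FractionRing R),
      (∑ i, (Submodule.Quotient.mk (f i) : ((FractionRing R) ⧸ LinearMap.range (Algebra.linearMap R (FractionRing R))))) = Submodule.Quotient.mk (∑ i, f i) :=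
    fun f => (map_sum (LinearMap.range (Algebra.linearMap R (FractionRing R))).mkQ
      f Finset.univ).symm
  -- φ w always satisfies Hv
  have hφHv : ∀ w, Hv (φ w) := by
    intro w j
    have hsmul_mk : ∀ (rr : R) (q : (FractionRing R)), (star rr) • (Submodule.Quotient.mk q : ((FractionRing R) ⧸ LinearMap.range (Algebra.linearMap R (FractionRing R))))
        = Submodule.Quotient.mk (((algebraMap R (FractionRing R)) (star rr)) * q) := by
      intro rr q
      rw [← Submodule.Quotient.mk_smul]
      congr 1
      rw [Algebra.smul_def]
    have : ∀ i, star (A' i j) • φ w i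
        = Submodule.Quotient.mk (((algebraMap R (FractionRing R)) (Cm j i)) * (Cq⁻¹ *ᵥ fun k => (algebraMap R (FractionRing R)) (w k)) i) := by
      intro i
      rw [hφdef]
      show star (A' i j) • Submodule.Quotient.mk ((Cq⁻¹ *ᵥ fun k => (algebraMap R (FractionRing R)) (w k)) i) = _
      rw [hsmul_mk, hCm, Matrix.conjTranspose_apply]
    rw [Finset.sum_congr rfl fun i _ => this i, hmksum]
    have h2 : (∑ i, ((algebraMap R (FractionRing R)) (Cm j i)) * (Cq⁻¹ *ᵥ fun k => (algebraMap R (FractionRing R)) (w k)) i)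
        = (Cq *ᵥ (Cq⁻¹ *ᵥ fun k => (algebraMap R (FractionRing R)) (w k))) j := by
      rw [hCq]
      simp [Matrix.mulVec, dotProduct, Matrix.map_apply]
    rw [h2, Matrix.mulVec_mulVec, hCqinv', Matrix.one_mulVec, Submodule.Quotient.mk_eq_zero]
    exact ⟨w j, rfl⟩
  -- anything satisfying Hv is in range φ
  have hHvφ : ∀ v, Hv v → ∃ w, φ w = v := by
    intro v hv
    have := fun i => Submodule.Quotient.mk_surjective _ (v i)
    choose qv hqv using this
    have hv' : ∀ j, ∃ u : R, (algebraMap R (FractionRing R)) u = (Cq *ᵥ qv) j := by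
      intro j
      have h0 := hv j
      have h1 : ∀ i, star (A' i j) • v i = Submodule.Quotient.mk ((algebraMap R (FractionRing R)) (Cm j i) * qv i) := by
        intro i
        rw [← hqv i, ← Submodule.Quotient.mk_smul]
        congr 1
        rw [Algebra.smul_def, hCm, Matrix.conjTranspose_apply]
      rw [Finset.sum_congr rfl fun i _ => h1 i, hmksum] at h0
      have h2 : (∑ i, (algebraMap R (FractionRing R)) (Cm j i) * qv i) = (Cq *ᵥ qv) j := by
        simp [hCq, Matrix.mulVec, dotProduct, Matrix.map_apply]
      rw [h2] at h0
      rw [Submodule.Quotient.mk_eq_zero] at h0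
      obtain ⟨u, hu⟩ := h0
      exact ⟨u, hu⟩
    choose u hu using hv'
    refine ⟨u, ?_⟩
    funext i
    rw [hφdef]
    show Submodule.Quotient.mk ((Cq⁻¹ *ᵥ fun j => (algebraMap R (FractionRing R)) (u j)) i) = v i
    have h3 : (fun j => (algebraMap R (FractionRing R)) (u j)) = Cq *ᵥ qv := funext hu
    rw [h3, Matrix.mulVec_mulVec, hCqinv, Matrix.one_mulVec]
    exact hqv i
  -- c x always satisfies Hv
  have hcHv : ∀ x, Hv (c x) := by
    intro x j
    have h1 : ∀ i, star (A' i j) • c x i = B x (A' i j • g (Pi.single i 1)) := by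
      intro i
      rw [hsmulr]
      rfl
    rw [Finset.sum_congr rfl fun i _ => h1 i, ← hBsum]
    have h2 : (∑ i, A' i j • g (Pi.single i 1)) = g (A' *ᵥ Pi.single j 1) := by
      rw [show A' *ᵥ Pi.single j 1 = fun i => A' i j * 1 from funext fun i => by simp, map_pi_single_sum g (fun i => A' i j * 1)]
      refine Finset.sum_congr rfl fun i _ => ?_
      rw [mul_one]
    rw [h2]
    have h3 : g (A' *ᵥ Pi.single j 1) = 0 := by
      rw [hgzero]
      exact ⟨Pi.single j 1, Matrix.toLin'_apply _ _⟩
    rw [h3, hB0]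
  -- ## Step F: every Hv vector is in the range of c (uses injectivity of Q/R)
  have hbaer : Module.Baer R ((FractionRing R) ⧸ LinearMap.range (Algebra.linearMap R (FractionRing R))) := baer_of_divisible (qr_divisible R)
  set gc : ConjMod (Fin m → R) →ₗ[R] ConjMod M :=
    { toFun := fun w => g w
      map_add' := fun w w' => g.map_add w w'
      map_smul' := by
        intro rr w
        exact g.map_smul (star rr) (show (Fin m → R) from w) } with hgcdef
  have hgc_apply : ∀ w, gc w = g w := fun _ => rfl
  have hHvc : ∀ v, Hv v → ∃ x : M, c x = v := by
    intro v hv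
    set f0 : ConjMod (Fin m → R) →ₗ[R] ((FractionRing R) ⧸ LinearMap.range (Algebra.linearMap R (FractionRing R))) :=
      { toFun := fun w => ∑ i, star ((w : Fin m → R) i) • v i
        map_add' := by
          intro w w'
          show (∑ i, star ((show Fin m → R from w) i + (show Fin m → R from w') i) • v i)
              = (∑ i, star ((show Fin m → R from w) i) • v i)
              + (∑ i, star ((show Fin m → R from w') i) • v i)
          simp only [star_add, add_smul]
          rw [Finset.sum_add_distrib]
        map_smul' := by
          intro rr w
          show (∑ i, star ((star rr • (show Fin m → R from w) : Fin m → R) i) • v i)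
              = rr • ∑ i, star ((show Fin m → R from w) i) • v i
          rw [Finset.smul_sum]
          refine Finset.sum_congr rfl fun i _ => ?_
          rw [Pi.smul_apply, smul_eq_mul, star_mul', star_star, mul_smul] } with hf0def
    have hf0_apply : ∀ w : Fin m → R, f0 w = ∑ i, star (w i) • v i := fun _ => rfl
    have hf0A : ∀ u : Fin m → R, (∑ i, star ((A' *ᵥ u) i) • v i) = 0 := by
      intro u
      have hterm : ∀ i, star ((A' *ᵥ u) i) • v i
          = ∑ j, star (u j) • (star (A' i j) • v i) := by
        intro i
        have hmv : (A' *ᵥ u) i = ∑ j, A' i j * u j := rfl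
        rw [hmv, star_sum, Finset.sum_smul]
        refine Finset.sum_congr rfl fun j _ => ?_
        rw [star_mul', mul_comm, mul_smul]
      rw [Finset.sum_congr rfl fun i _ => hterm i, Finset.sum_comm]
      have hsw : ∀ j, (∑ i, star (u j) • (star (A' i j) • v i))
          = star (u j) • ∑ i, star (A' i j) • v i := fun j => (Finset.smul_sum).symm
      rw [Finset.sum_congr rfl fun j _ => hsw j]
      rw [Finset.sum_congr rfl fun j _ => by rw [hv j, smul_zero]]
      exact Finset.sum_const_zero
    have hle : LinearMap.ker gc ≤ LinearMap.ker f0 := by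
      intro w hw
      rw [LinearMap.mem_ker] at hw ⊢
      have hw' : g w = 0 := hw
      obtain ⟨u, hu⟩ := (hgzero w).mp hw'
      rw [Matrix.toLin'_apply] at hu
      have hwu : (w : Fin m → R) = A' *ᵥ u := hu.symm
      subst hwu
      exact (hf0_apply _).trans (hf0A u)
    set fbar := Submodule.liftQ (LinearMap.ker gc) f0 hle with hfbar
    set f1 : ↥(LinearMap.range gc) →ₗ[R] ((FractionRing R) ⧸ LinearMap.range (Algebra.linearMap R (FractionRing R))) :=
      fbar ∘ₗ ((LinearMap.quotKerEquivRange gc).symm : _ →ₗ[R] _) with hf1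
    obtain ⟨F, hF⟩ := Module.Baer.extension_property hbaer (LinearMap.range gc).subtype
      (Submodule.injective_subtype _) f1
    have hFg : ∀ w, F (gc w) = f0 w := by
      intro w
      have hmem : gc w ∈ LinearMap.range gc := LinearMap.mem_range_self _ w
      have h5 : F (gc w) = f1 ⟨gc w, hmem⟩ :=
        congrFun (congrArg DFunLike.coe hF) ⟨gc w, hmem⟩
      rw [h5, hf1]
      have h6 : ((LinearMap.quotKerEquivRange gc).symm ⟨gc w, hmem⟩)
          = Submodule.Quotient.mk w := by
        rw [LinearEquiv.symm_apply_eq]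
        exact Subtype.ext (LinearMap.quotKerEquivRange_apply_mk gc w).symm
      simp only [LinearMap.comp_apply, LinearEquiv.coe_coe]
      rw [h6, hfbar, Submodule.liftQ_apply]
    set Fs : M →ₛₗ[starRingEnd R] ((FractionRing R) ⧸ LinearMap.range (Algebra.linearMap R (FractionRing R))) :=
      { toFun := fun x => F (show ConjMod M from x)
        map_add' := fun x y => F.map_add x y
        map_smul' := by
          intro rr x
          have hx : (star rr • (show ConjMod M from x) : ConjMod M)
              = (show ConjMod M from rr • x) := by
            rw [ConjMod.smul_def, star_star]
          show F (show ConjMod M from rr • x) = star rr • F (show ConjMod M from x)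
          rw [← hx, _root_.map_smul] } with hFs
    obtain ⟨x, hx⟩ := hsurj Fs
    refine ⟨x, ?_⟩
    funext i
    calc c x i = B x (g (Pi.single i 1)) := rfl
      _ = Fs (g (Pi.single i 1)) := hx _
      _ = F (gc (Pi.single i 1)) := rfl
      _ = f0 (Pi.single i 1) := hFg _
      _ = v i := by
        rw [hf0_apply]
        rw [Finset.sum_eq_single i]
        · rw [Pi.single_eq_same, star_one, one_smul]
        · intro j _ hj
          rw [Pi.single_eq_of_ne hj, star_zero, zero_smul]
        · intro h
          exact absurd (Finset.mem_univ i) h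
  -- ## Step G: assemble the equivalence coker Cm ≃ M ⧸ P
  have hrangeeq : LinearMap.range φ = LinearMap.range c := by
    ext v
    simp only [LinearMap.mem_range]
    constructor
    · rintro ⟨w, rfl⟩
      exact hHvc _ (hφHv w)
    · rintro ⟨x, rfl⟩
      obtain ⟨w, hw⟩ := hHvφ _ (hcHv x)
      exact ⟨w, hw⟩
  have e2 : ((Fin m → R) ⧸ LinearMap.range (Matrix.toLin' Cm)) ≃ₗ[R] (M ⧸ P) :=
    (Submodule.quotEquivOfEq _ _ hkerφ.symm).trans <|
      (LinearMap.quotKerEquivRange φ).trans <|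
        (LinearEquiv.ofEq _ _ hrangeeq).trans <|
          ((LinearMap.quotKerEquivRange c).symm.trans
            (Submodule.quotEquivOfEq _ _ hkerc))
  -- ## Step H: horseshoe presentation of M
  set h2 : (Fin m → R) →ₗ[R] (M ⧸ P) :=
    (e2 : _ →ₗ[R] _) ∘ₗ (LinearMap.range (Matrix.toLin' Cm)).mkQ with hh2
  have hh2surj : Function.Surjective h2 := by
    intro z
    obtain ⟨y, hy⟩ := e2.surjective z
    obtain ⟨w, hw⟩ := Submodule.Quotient.mk_surjective _ y
    refine ⟨w, ?_⟩
    rw [hh2]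
    simp only [LinearMap.comp_apply, LinearEquiv.coe_coe, Submodule.mkQ_apply]
    rw [hw, hy]
  have hh2ker : ∀ w, h2 w = 0 ↔ w ∈ LinearMap.range (Matrix.toLin' Cm) := by
    intro w
    rw [hh2]
    simp only [LinearMap.comp_apply, LinearEquiv.coe_coe, Submodule.mkQ_apply]
    rw [LinearEquiv.map_eq_zero_iff, Submodule.Quotient.mk_eq_zero]
  have hxs : ∀ j : Fin m, ∃ x : M, Submodule.Quotient.mk x = h2 (Pi.single j 1) :=
    fun j => Submodule.Quotient.mk_surjective _ _
  choose xs hxs using hxs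
  set g2 : (Fin m → R) →ₗ[R] M := Fintype.linearCombination R xs with hg2def
  have hg2single : ∀ j, g2 (Pi.single j 1) = xs j := by
    intro j
    rw [hg2def, Fintype.linearCombination_apply]
    rw [Finset.sum_eq_single j]
    · rw [Pi.single_eq_same, one_smul]
    · intro i _ hi
      rw [Pi.single_eq_of_ne hi, zero_smul]
    · intro h
      exact absurd (Finset.mem_univ j) h
  have hg2mk : ∀ w, P.mkQ (g2 w) = h2 w := by
    have hcomp : P.mkQ ∘ₗ g2 = h2 := by
      apply Module.Basis.ext (Pi.basisFun R (Fin m))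
      intro j
      rw [LinearMap.comp_apply, Pi.basisFun_apply, hg2single, Submodule.mkQ_apply, hxs]
    intro w
    exact congrFun (congrArg DFunLike.coe hcomp) w
  have hD : ∀ j : Fin m, ∃ dj : Fin m → R, g dj = - g2 (Cm *ᵥ Pi.single j 1) := by
    intro j
    have hmem : - g2 (Cm *ᵥ Pi.single j 1) ∈ P := by
      have h0 : h2 (Cm *ᵥ Pi.single j 1) = 0 :=
        (hh2ker _).mpr ⟨Pi.single j 1, Matrix.toLin'_apply _ _⟩
      have h1 : P.mkQ (g2 (Cm *ᵥ Pi.single j 1)) = 0 := by rw [hg2mk, h0]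
      rw [Submodule.mkQ_apply, Submodule.Quotient.mk_eq_zero] at h1
      exact neg_mem h1
    obtain ⟨w, hw⟩ := (hgrange _).mp hmem
    exact ⟨w, hw⟩
  choose ds hds using hD
  set Dm : Matrix (Fin m) (Fin m) R := Matrix.of fun i j => ds j i with hDm
  have hDcol : ∀ j, Dm *ᵥ Pi.single j 1 = ds j := by
    intro j
    funext i
    simp [hDm]
  set Tm : Matrix (Fin m ⊕ Fin m) (Fin m ⊕ Fin m) R := Matrix.fromBlocks A' Dm 0 Cm with hTm
  set GG : ((Fin m ⊕ Fin m) → R) →ₗ[R] M :=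
    g ∘ₗ LinearMap.funLeft R R Sum.inl + g2 ∘ₗ LinearMap.funLeft R R Sum.inr with hGGdef
  have hGGapply : ∀ z, GG z = g (z ∘ Sum.inl) + g2 (z ∘ Sum.inr) := fun z => rfl
  have hkey : ∀ s : Fin m → R, g2 (Cm *ᵥ s) = - g (Dm *ᵥ s) := by
    have hcomp : g2 ∘ₗ Matrix.toLin' Cm = - (g ∘ₗ Matrix.toLin' Dm) := by
      apply Module.Basis.ext (Pi.basisFun R (Fin m))
      intro j
      rw [Pi.basisFun_apply]
      show g2 (Matrix.toLin' Cm (Pi.single j 1)) = -(g (Matrix.toLin' Dm (Pi.single j 1)))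
      rw [Matrix.toLin'_apply, Matrix.toLin'_apply, hDcol, hds, neg_neg]
    intro s
    have := congrFun (congrArg DFunLike.coe hcomp) s
    simp only [LinearMap.comp_apply, LinearMap.neg_apply, Matrix.toLin'_apply] at this
    exact this
  have hGGsurj : Function.Surjective GG := by
    intro x
    obtain ⟨vv, hvv⟩ := hh2surj (P.mkQ x)
    have hmem : x - g2 vv ∈ P := by
      have h0 : P.mkQ (x - g2 vv) = 0 := by rw [map_sub, hg2mk, hvv, sub_self]
      rwa [Submodule.mkQ_apply, Submodule.Quotient.mk_eq_zero] at h0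
    obtain ⟨u, hu⟩ := (hgrange _).mp hmem
    refine ⟨Sum.elim u vv, ?_⟩
    rw [hGGapply]
    have hl : (Sum.elim u vv) ∘ Sum.inl = u := rfl
    have hr : (Sum.elim u vv) ∘ Sum.inr = vv := rfl
    rw [hl, hr, hu, sub_add_cancel]
  have hGGker : LinearMap.ker GG = LinearMap.range (Matrix.toLin' Tm) := by
    ext z
    rw [LinearMap.mem_ker]
    constructor
    · intro hz
      have hz2 : h2 (z ∘ Sum.inr) = 0 := by
        have h0 : P.mkQ (GG z) = 0 := by rw [hz, map_zero]
        rw [hGGapply, map_add] at h0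
        have hgu : P.mkQ (g (z ∘ Sum.inl)) = 0 := by
          rw [Submodule.mkQ_apply, Submodule.Quotient.mk_eq_zero]
          exact hgP _
        rw [hgu, zero_add, hg2mk] at h0
        exact h0
      obtain ⟨s, hs⟩ := (hh2ker _).mp hz2
      rw [Matrix.toLin'_apply] at hs
      have hgu0 : g ((z ∘ Sum.inl) - Dm *ᵥ s) = 0 := by
        rw [map_sub]
        have h0 : g (z ∘ Sum.inl) + g2 (z ∘ Sum.inr) = 0 := by rw [← hGGapply, hz]
        rw [← hs, hkey] at h0
        have h1 : g (z ∘ Sum.inl) = g (Dm *ᵥ s) := by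
          have := h0
          rw [add_neg_eq_zero] at this
          exact this
        rw [h1, sub_self]
      obtain ⟨t, ht⟩ := (hgzero _).mp hgu0
      rw [Matrix.toLin'_apply] at ht
      refine ⟨Sum.elim t s, ?_⟩
      rw [Matrix.toLin'_apply, hTm, Matrix.fromBlocks_mulVec]
      have hel : Sum.elim t s ∘ Sum.inl = t := rfl
      have her : Sum.elim t s ∘ Sum.inr = s := rfl
      rw [hel, her]
      funext w
      cases w with
      | inl i =>
        show (A' *ᵥ t + Dm *ᵥ s) i = z (Sum.inl i)
        rw [Pi.add_apply]
        have h3 := congrFun ht i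
        rw [Pi.sub_apply] at h3
        have : (A' *ᵥ t) i = z (Sum.inl i) - (Dm *ᵥ s) i := h3
        rw [this]
        ring
      | inr j =>
        show (((0 : Matrix (Fin m) (Fin m) R) *ᵥ t : Fin m → R) + Cm *ᵥ s) j = z (Sum.inr j)
        rw [Matrix.zero_mulVec, Pi.add_apply, Pi.zero_apply, zero_add]
        exact congrFun hs j
    · rintro ⟨y, rfl⟩
      rw [Matrix.toLin'_apply, hTm, Matrix.fromBlocks_mulVec, hGGapply]
      have hel : ∀ (a b : Fin m → R), Sum.elim a b ∘ Sum.inl = a := fun _ _ => rfl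
      have her : ∀ (a b : Fin m → R), Sum.elim a b ∘ Sum.inr = b := fun _ _ => rfl
      rw [hel, her, Matrix.zero_mulVec, zero_add, hkey]
      have h1 : g (A' *ᵥ (y ∘ Sum.inl) + Dm *ᵥ (y ∘ Sum.inr))
          = g (A' *ᵥ (y ∘ Sum.inl)) + g (Dm *ᵥ (y ∘ Sum.inr)) := map_add g _ _
      have h2 : g (A' *ᵥ (y ∘ Sum.inl)) = 0 :=
        (hgzero _).mpr ⟨_, Matrix.toLin'_apply _ _⟩
      rw [h1, h2, zero_add, add_neg_cancel]
  have presT : (((Fin m ⊕ Fin m) → R) ⧸ LinearMap.range (Matrix.toLin' Tm)) ≃ₗ[R] M :=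
    (Submodule.quotEquivOfEq _ _ hGGker.symm).trans
      (LinearMap.quotKerEquivOfSurjective GG hGGsurj)
  have hassoc : Associated A.det Tm.det :=
    det_associated_of_coker_equiv A Tm (presM.trans presT.symm)
  have hdetTm : Tm.det = A'.det * star A'.det := by
    rw [hTm, Matrix.det_fromBlocks_zero₂₁, hdetCm]
  rw [hdetTm] at hassoc
  exact ⟨hassoc, A'.det, hassoc⟩
end
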